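/- Let c_ε > 0 and for each m ∈ ℕ set β_m = c_ε·(2/3)·(log 3/log 2)·6^m and define the probabilities P_m(n) = exp(−3β_m/2^(n+1) − c_ε·3^n)/Z_m where Z_m = Σ_{n≥0} exp(−3β_m/2^(n+1) − c_ε·3^n). Then P_m(m) → 1 as m → ∞. -/

import Mathlib

open Real Filter

namespace Stmt8Aux

noncomputable def AA (c L : ℝ) (m n : ℕ) : ℝ :=
  -(2 * c * L * (6:ℝ)^m / 2^(n+1)) - c * (3:ℝ)^n

noncomputable def tt (c L : ℝ) (m n : ℕ) : ℝ :=
  Real.exp (AA c L m n - AA c L m m)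

lemma six_pow (m : ℕ) : (6:ℝ)^m = 2^m * 3^m := by
  rw [← mul_pow]; norm_num

lemma AA_diag (c L : ℝ) (m : ℕ) : AA c L m m = -(c * L * 3^m) - c * 3^m := by
  unfold AA
  rw [six_pow, pow_succ]
  have h2 : (2:ℝ)^m ≠ 0 := by positivity
  field_simp

lemma summable_expA (c L : ℝ) (hc : 0 < c) (hL : 0 < L) (m : ℕ) :
    Summable (fun n => Real.exp (AA c L m n)) := by
  have hgeo : Summable (fun n : ℕ => Real.exp (-c) ^ n) :=
    summable_geometric_of_lt_one (Real.exp_pos _).le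
      (Real.exp_lt_one_iff.mpr (show -c < 0 by linarith))
  have hle : ∀ n : ℕ, Real.exp (AA c L m n) ≤ Real.exp (-c) ^ n := by
    intro n
    rw [← Real.exp_nat_mul]
    apply Real.exp_le_exp.mpr
    unfold AA
    have h1 : 0 ≤ 2 * c * L * (6:ℝ)^m / 2^(n+1) := by positivity
    have h2 : (n:ℝ) ≤ 3^n := by
      calc (n:ℝ) ≤ 2^n := by exact_mod_cast (Nat.lt_two_pow_self).le
        _ ≤ 3^n := by gcongr; norm_num
    nlinarith
  exact Summable.of_nonneg_of_le (fun n => (Real.exp_pos _).le) hle hgeo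

lemma summable_tt (c L : ℝ) (hc : 0 < c) (hL : 0 < L) (m : ℕ) :
    Summable (tt c L m) := by
  have := (summable_expA c L hc hL m).mul_right (Real.exp (-(AA c L m m)))
  refine this.congr fun n => ?_
  rw [tt, ← Real.exp_add]; ring_nf

lemma tt_nonneg (c L : ℝ) (m n : ℕ) : 0 ≤ tt c L m n := (Real.exp_pos _).le

lemma tt_diag (c L : ℝ) (m : ℕ) : tt c L m m = 1 := by
  simp [tt]

/-- bound for n < m -/
lemma tt_lt (c L : ℝ) (hc : 0 < c) (hL1 : 1 < L) (m n : ℕ) (hn : n < m) :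
    tt c L m n ≤ Real.exp (-(c * (L - 1)) * 3^m) := by
  unfold tt
  apply Real.exp_le_exp.mpr
  rw [AA_diag]
  unfold AA
  have key : 2 * c * L * (6:ℝ)^m / 2^(n+1) ≥ 2 * (c * L * 3^m) := by
    have h1 : (2:ℝ)^(n+1) ≤ 2^m := by
      apply pow_le_pow_right₀ (by norm_num) (by omega)
    have h2 : (0:ℝ) < 2^(n+1) := by positivity
    rw [ge_iff_le, le_div_iff₀ h2]
    calc 2 * (c * L * 3^m) * 2^(n+1) ≤ 2 * (c * L * 3^m) * 2^m := by
          apply mul_le_mul_of_nonneg_left h1; positivity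
      _ = 2 * c * L * 6^m := by rw [six_pow]; ring
  have h4 : (0:ℝ) ≤ c * 3^n := by positivity
  have h5 : (0:ℝ) < 3^m := by positivity
  nlinarith

/-- bound for indices beyond m -/
lemma tt_gt (c L : ℝ) (hc : 0 < c) (hL1 : 1 < L) (hL2 : L < 2) (m j : ℕ) :
    tt c L m (j + (m+1)) ≤ Real.exp (-(c * (2 - L)) * 3^m) * Real.exp (-(c * (2 - L))) ^ j := by
  rw [← Real.exp_nat_mul, ← Real.exp_add]
  unfold tt
  apply Real.exp_le_exp.mpr
  rw [AA_diag]
  unfold AA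
  have h1 : 0 ≤ 2 * c * L * (6:ℝ)^m / 2^(j + (m+1) + 1) := by positivity
  have hsplit : (3:ℝ)^(j+(m+1)) = 3^(j+1) * 3^m := by
    rw [show j+(m+1) = (j+1)+m by omega, pow_add]
  have hpow : 1 + ((j:ℝ)+1)*2 ≤ 3^(j+1) := by
    have := one_add_mul_le_pow (a := (2:ℝ)) (by norm_num) (j+1)
    norm_num at this
    push_cast
    linarith
  have h3m : (1:ℝ) ≤ 3^m := one_le_pow₀ (by norm_num : (1:ℝ) ≤ 3)
  have hj : (0:ℝ) ≤ j := Nat.cast_nonneg j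
  have h5 : 0 ≤ c * 3^m * ((3:ℝ)^(j+1) - (2*(j:ℝ)+3)) := by
    apply mul_nonneg (by positivity); linarith
  have h6 : 0 ≤ c * (j:ℝ) * (2*(3:ℝ)^m - (2-L)) := by
    apply mul_nonneg (by positivity); linarith
  rw [hsplit]
  nlinarith [h5, h6, h1]


lemma one_le_S (c L : ℝ) (hc : 0 < c) (hL : 0 < L) (m : ℕ) :
    1 ≤ ∑' n, tt c L m n := by
  have := Summable.le_tsum (summable_tt c L hc hL m) m (fun n _ => tt_nonneg c L m n)
  rwa [tt_diag] at this

lemma S_le (c L : ℝ) (hc : 0 < c) (hL1 : 1 < L) (hL2 : L < 2) (m : ℕ) :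
    ∑' n, tt c L m n ≤
      1 + m * Real.exp (-(c * (L - 1)) * 3^m)
        + Real.exp (-(c * (2 - L)) * 3^m) * (1 - Real.exp (-(c * (2 - L))))⁻¹ := by
  have hL0 : 0 < L := by linarith
  have hsum := summable_tt c L hc hL0 m
  rw [← Summable.sum_add_tsum_nat_add (m+1) hsum, Finset.sum_range_succ, tt_diag]
  have hb1 : ∑ i ∈ Finset.range m, tt c L m i ≤ m * Real.exp (-(c * (L - 1)) * 3^m) := by
    calc ∑ i ∈ Finset.range m, tt c L m i
        ≤ ∑ _i ∈ Finset.range m, Real.exp (-(c * (L - 1)) * 3^m) :=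
          Finset.sum_le_sum (fun i hi => tt_lt c L hc hL1 m i (Finset.mem_range.mp hi))
      _ = m * Real.exp (-(c * (L - 1)) * 3^m) := by
          rw [Finset.sum_const, Finset.card_range, nsmul_eq_mul]
  have hq : Real.exp (-(c * (2 - L))) < 1 :=
    Real.exp_lt_one_iff.mpr (by nlinarith)
  have hgeo : Summable (fun j : ℕ => Real.exp (-(c * (2 - L))) ^ j) :=
    summable_geometric_of_lt_one (Real.exp_pos _).le hq
  have hb2 : ∑' j, tt c L m (j + (m+1)) ≤
      Real.exp (-(c * (2 - L)) * 3^m) * (1 - Real.exp (-(c * (2 - L))))⁻¹ := by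
    calc ∑' j, tt c L m (j + (m+1))
        ≤ ∑' j : ℕ, Real.exp (-(c * (2 - L)) * 3^m) * Real.exp (-(c * (2 - L))) ^ j :=
          Summable.tsum_le_tsum (fun j => tt_gt c L hc hL1 hL2 m j)
            ((summable_nat_add_iff (m+1)).mpr hsum) (hgeo.mul_left _)
      _ = Real.exp (-(c * (2 - L)) * 3^m) * (1 - Real.exp (-(c * (2 - L))))⁻¹ := by
          rw [tsum_mul_left, tsum_geometric_of_lt_one (Real.exp_pos _).le hq]
  linarith

lemma aux_tendsto_exp_pow (b : ℝ) (hb : 0 < b) :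
    Filter.Tendsto (fun m : ℕ => Real.exp (-b * 3^m)) Filter.atTop (nhds 0) := by
  have hq : Real.exp (-b) < 1 := Real.exp_lt_one_iff.mpr (by linarith)
  have hgeo : Filter.Tendsto (fun m : ℕ => Real.exp (-b) ^ m) Filter.atTop (nhds 0) :=
    tendsto_pow_atTop_nhds_zero_of_lt_one (Real.exp_pos _).le hq
  apply tendsto_of_tendsto_of_tendsto_of_le_of_le tendsto_const_nhds hgeo
  · intro m; positivity
  · intro m
    show Real.exp (-b * 3^m) ≤ Real.exp (-b) ^ m
    rw [← Real.exp_nat_mul]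
    apply Real.exp_le_exp.mpr
    have h2 : (m:ℝ) ≤ 3^m := by
      calc (m:ℝ) ≤ 2^m := by exact_mod_cast (Nat.lt_two_pow_self).le
        _ ≤ 3^m := by gcongr; norm_num
    nlinarith

lemma aux_tendsto_mul_exp_pow (a : ℝ) (ha : 0 < a) :
    Filter.Tendsto (fun m : ℕ => (m:ℝ) * Real.exp (-a * 3^m)) Filter.atTop (nhds 0) := by
  have hq : Real.exp (-a) < 1 := Real.exp_lt_one_iff.mpr (by linarith)
  have hqn : ‖Real.exp (-a)‖ < 1 := by
    rw [Real.norm_eq_abs, abs_of_pos (Real.exp_pos _)]; exact hq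
  have hsum : Summable (fun m : ℕ => (m:ℝ) * Real.exp (-a) ^ m) := by
    have := summable_pow_mul_geometric_of_norm_lt_one (R := ℝ) 1 hqn
    exact this.congr fun m => by rw [pow_one]
  have hgeo : Filter.Tendsto (fun m : ℕ => (m:ℝ) * Real.exp (-a) ^ m) Filter.atTop (nhds 0) :=
    hsum.tendsto_atTop_zero
  apply tendsto_of_tendsto_of_tendsto_of_le_of_le tendsto_const_nhds hgeo
  · intro m; positivity
  · intro m
    have h2 : (m:ℝ) ≤ 3^m := by
      calc (m:ℝ) ≤ 2^m := by exact_mod_cast (Nat.lt_two_pow_self).le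
        _ ≤ 3^m := by gcongr; norm_num
    have hle : Real.exp (-a * 3^m) ≤ Real.exp (-a) ^ m := by
      rw [← Real.exp_nat_mul]
      apply Real.exp_le_exp.mpr
      nlinarith
    have hm : (0:ℝ) ≤ m := Nat.cast_nonneg m
    show (m:ℝ) * Real.exp (-a * 3^m) ≤ (m:ℝ) * Real.exp (-a) ^ m
    exact mul_le_mul_of_nonneg_left hle hm

lemma S_tendsto (c L : ℝ) (hc : 0 < c) (hL1 : 1 < L) (hL2 : L < 2) :
    Filter.Tendsto (fun m : ℕ => ∑' n, tt c L m n) Filter.atTop (nhds 1) := by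
  have hL0 : 0 < L := by linarith
  have ha : 0 < c * (L - 1) := by nlinarith
  have hb : 0 < c * (2 - L) := by nlinarith
  have hupper : Filter.Tendsto
      (fun m : ℕ => 1 + m * Real.exp (-(c * (L - 1)) * 3^m)
        + Real.exp (-(c * (2 - L)) * 3^m) * (1 - Real.exp (-(c * (2 - L))))⁻¹)
      Filter.atTop (nhds 1) := by
    have h1 := aux_tendsto_mul_exp_pow (c * (L-1)) ha
    have h2 := (aux_tendsto_exp_pow (c * (2-L)) hb).mul_const
      (1 - Real.exp (-(c * (2 - L))))⁻¹
    have h3 := ((tendsto_const_nhds (x := (1:ℝ)) (f := Filter.atTop (α := ℕ))).add h1).add h2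
    simpa using h3
  apply tendsto_of_tendsto_of_tendsto_of_le_of_le tendsto_const_nhds hupper
  · intro m; exact one_le_S c L hc hL0 m
  · intro m; exact S_le c L hc hL1 hL2 m

end Stmt8Aux

open Stmt8Aux in
theorem stmt_8 (cε : ℝ) (hc : 0 < cε) :
    Filter.Tendsto
      (fun m : ℕ =>
        Real.exp (-(3 * (cε * (2 / 3) * (Real.log 3 / Real.log 2) * 6 ^ m) / 2 ^ (m + 1))
            - cε * 3 ^ m) /
        (∑' n : ℕ,
          Real.exp (-(3 * (cε * (2 / 3) * (Real.log 3 / Real.log 2) * 6 ^ m) / 2 ^ (n + 1))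
            - cε * 3 ^ n)))
      Filter.atTop (nhds 1) := by
  set L : ℝ := Real.log 3 / Real.log 2 with hLdef
  have hlog2 : 0 < Real.log 2 := Real.log_pos (by norm_num)
  have hL1 : 1 < L := by
    rw [hLdef, lt_div_iff₀ hlog2, one_mul]
    exact Real.log_lt_log (by norm_num) (by norm_num)
  have hL2 : L < 2 := by
    rw [hLdef, div_lt_iff₀ hlog2]
    have h43 : Real.log 3 < Real.log 4 := Real.log_lt_log (by norm_num) (by norm_num)
    have h4 : Real.log 4 = 2 * Real.log 2 := by
      rw [show (4:ℝ) = 2^2 by norm_num, Real.log_pow]; push_cast; ring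
    linarith
  have hE : ∀ m n : ℕ,
      (-(3 * (cε * (2 / 3) * L * 6 ^ m) / 2 ^ (n + 1)) - cε * 3 ^ n) = AA cε L m n := by
    intro m n; unfold AA; ring
  have hrw : ∀ m : ℕ,
      Real.exp (AA cε L m m) / (∑' n : ℕ, Real.exp (AA cε L m n))
        = (∑' n, tt cε L m n)⁻¹ := by
    intro m
    have htsum : (∑' n : ℕ, Real.exp (AA cε L m n))
        = Real.exp (AA cε L m m) * ∑' n, tt cε L m n := by
      rw [← tsum_mul_left]
      refine tsum_congr fun n => ?_
      rw [tt, ← Real.exp_add]; ring_nf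
    rw [htsum, div_mul_eq_div_div, div_self (Real.exp_ne_zero _), one_div]
  simp only [hE, hrw]
  have hfin := (S_tendsto cε L hc hL1 hL2).inv₀ one_ne_zero
  simpa using hfin
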